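/- Let X : ℤ → ℂ satisfy the third order recurrence X_m = f_1·X_{m−a} + f_2·X_{m−b} + f_3·X_{m−c} for all integers m, with f_1, f_2, f_3 nonzero complex constants and a, b, c integers. Then for every integer m and nonnegative integer k: ∑_{j=0}^{k} ∑_{s=0}^{j} C(k,j)·C(j,s)·(f_2/f_3)^j·(f_1/f_2)^s·X_{m−ck+(c−b)j+(b−a)s} = X_m/f_3^k. -/

import Mathlib

private lemma choose_split (k : ℕ) (g : ℕ → ℂ) :
    ∑ j ∈ Finset.range (k + 2), ((k + 1).choose j : ℂ) * g j
      = ∑ j ∈ Finset.range (k + 1), (k.choose j : ℂ) * g j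
        + ∑ j ∈ Finset.range (k + 1), (k.choose j : ℂ) * g (j + 1) := by
  have e1 : ∑ j ∈ Finset.range (k + 2), (k.choose j : ℂ) * g j
      = ∑ j ∈ Finset.range (k + 1), (k.choose (j + 1) : ℂ) * g (j + 1)
        + (k.choose 0 : ℂ) * g 0 := Finset.sum_range_succ' _ (k + 1)
  have e2 : ∑ j ∈ Finset.range (k + 2), (k.choose j : ℂ) * g j
      = ∑ j ∈ Finset.range (k + 1), (k.choose j : ℂ) * g j := by
    rw [Finset.sum_range_succ]; simp
  have e3 : ∑ j ∈ Finset.range (k + 2), ((k + 1).choose j : ℂ) * g j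
      = ∑ j ∈ Finset.range (k + 1), ((k + 1).choose (j + 1) : ℂ) * g (j + 1)
        + ((k + 1).choose 0 : ℂ) * g 0 := Finset.sum_range_succ' _ (k + 1)
  rw [e3]
  have e4 : ∀ j, (((k + 1).choose (j + 1) : ℕ) : ℂ)
      = (k.choose j : ℂ) + (k.choose (j + 1) : ℂ) := by
    intro j; exact_mod_cast congrArg (Nat.cast : ℕ → ℂ) (Nat.choose_succ_succ k j)
  simp_rw [e4, add_mul, Finset.sum_add_distrib]
  rw [← e2, e1]
  simp [add_comm, add_left_comm]

theorem stmt18 (X : ℤ → ℂ) (f₁ f₂ f₃ : ℂ) (hf₁ : f₁ ≠ 0) (hf₂ : f₂ ≠ 0) (hf₃ : f₃ ≠ 0)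
    (a b c : ℤ)
    (hX : ∀ m : ℤ, X m = f₁ * X (m - a) + f₂ * X (m - b) + f₃ * X (m - c)) :
    ∀ (m : ℤ) (k : ℕ),
      ∑ j ∈ Finset.range (k + 1), ∑ s ∈ Finset.range (j + 1),
          (k.choose j : ℂ) * (j.choose s : ℂ) * (f₂ / f₃) ^ j * (f₁ / f₂) ^ s *
            X (m - c * k + (c - b) * j + (b - a) * s) =
        X m / f₃ ^ k := by
  intro m k
  induction k generalizing m with
  | zero => simp
  | succ k ih =>
    push_cast
    have perj : ∀ j : ℕ, (k.choose j : ℂ) *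
          (∑ s ∈ Finset.range (j + 1 + 1), ((j + 1).choose s : ℂ) * (f₂ / f₃) ^ (j + 1) *
            (f₁ / f₂) ^ s * X (m - c * ((k : ℤ) + 1) + (c - b) * ((j + 1 : ℕ) : ℤ) + (b - a) * s))
        = f₂ / f₃ * (∑ s ∈ Finset.range (j + 1),
              (k.choose j : ℂ) * (j.choose s : ℂ) * (f₂ / f₃) ^ j * (f₁ / f₂) ^ s *
                X ((m - b) - c * k + (c - b) * j + (b - a) * s))
          + f₂ / f₃ * (f₁ / f₂) * (∑ s ∈ Finset.range (j + 1),
              (k.choose j : ℂ) * (j.choose s : ℂ) * (f₂ / f₃) ^ j * (f₁ / f₂) ^ s *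
                X ((m - a) - c * k + (c - b) * j + (b - a) * s)) := by
      intro j
      have hin : (∑ s ∈ Finset.range (j + 1 + 1), ((j + 1).choose s : ℂ) * (f₂ / f₃) ^ (j + 1) *
            (f₁ / f₂) ^ s * X (m - c * ((k : ℤ) + 1) + (c - b) * ((j + 1 : ℕ) : ℤ) + (b - a) * s))
          = ∑ s ∈ Finset.range (j + 2), ((j + 1).choose s : ℂ) *
              ((f₂ / f₃) ^ (j + 1) * (f₁ / f₂) ^ s *
                X (m - c * ((k : ℤ) + 1) + (c - b) * ((j + 1 : ℕ) : ℤ) + (b - a) * s)) :=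
        Finset.sum_congr rfl fun s _ => by ring
      rw [hin, choose_split j (fun s => (f₂ / f₃) ^ (j + 1) * (f₁ / f₂) ^ s *
        X (m - c * ((k : ℤ) + 1) + (c - b) * ((j + 1 : ℕ) : ℤ) + (b - a) * s)),
        mul_add, Finset.mul_sum, Finset.mul_sum, Finset.mul_sum, Finset.mul_sum]
      congr 1
      · refine Finset.sum_congr rfl fun s _ => ?_
        rw [show m - c * ((k : ℤ) + 1) + (c - b) * ((j + 1 : ℕ) : ℤ) + (b - a) * (s : ℤ)
            = (m - b) - c * k + (c - b) * j + (b - a) * s from by push_cast; ring]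
        ring
      · refine Finset.sum_congr rfl fun s _ => ?_
        rw [show m - c * ((k : ℤ) + 1) + (c - b) * ((j + 1 : ℕ) : ℤ) + (b - a) * ((s + 1 : ℕ) : ℤ)
            = (m - a) - c * k + (c - b) * j + (b - a) * s from by push_cast; ring]
        ring
    calc
      ∑ j ∈ Finset.range (k + 1 + 1), ∑ s ∈ Finset.range (j + 1),
          ((k + 1).choose j : ℂ) * (j.choose s : ℂ) * (f₂ / f₃) ^ j * (f₁ / f₂) ^ s *
            X (m - c * ((k : ℤ) + 1) + (c - b) * j + (b - a) * s)
        = ∑ j ∈ Finset.range (k + 2), ((k + 1).choose j : ℂ) *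
            (∑ s ∈ Finset.range (j + 1), (j.choose s : ℂ) * (f₂ / f₃) ^ j * (f₁ / f₂) ^ s *
              X (m - c * ((k : ℤ) + 1) + (c - b) * j + (b - a) * s)) := by
          refine Finset.sum_congr rfl fun j _ => ?_
          rw [Finset.mul_sum]
          exact Finset.sum_congr rfl fun s _ => by ring
      _ = (∑ j ∈ Finset.range (k + 1), (k.choose j : ℂ) *
            (∑ s ∈ Finset.range (j + 1), (j.choose s : ℂ) * (f₂ / f₃) ^ j * (f₁ / f₂) ^ s *
              X (m - c * ((k : ℤ) + 1) + (c - b) * j + (b - a) * s)))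
          + ∑ j ∈ Finset.range (k + 1), (k.choose j : ℂ) *
            (∑ s ∈ Finset.range (j + 1 + 1), ((j + 1).choose s : ℂ) * (f₂ / f₃) ^ (j + 1) *
              (f₁ / f₂) ^ s *
              X (m - c * ((k : ℤ) + 1) + (c - b) * ((j + 1 : ℕ) : ℤ) + (b - a) * s)) :=
          choose_split k (fun j => ∑ s ∈ Finset.range (j + 1),
            (j.choose s : ℂ) * (f₂ / f₃) ^ j * (f₁ / f₂) ^ s *
              X (m - c * ((k : ℤ) + 1) + (c - b) * j + (b - a) * s))
      _ = (∑ j ∈ Finset.range (k + 1), ∑ s ∈ Finset.range (j + 1),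
            (k.choose j : ℂ) * (j.choose s : ℂ) * (f₂ / f₃) ^ j * (f₁ / f₂) ^ s *
              X ((m - c) - c * k + (c - b) * j + (b - a) * s))
          + (f₂ / f₃ * (∑ j ∈ Finset.range (k + 1), ∑ s ∈ Finset.range (j + 1),
              (k.choose j : ℂ) * (j.choose s : ℂ) * (f₂ / f₃) ^ j * (f₁ / f₂) ^ s *
                X ((m - b) - c * k + (c - b) * j + (b - a) * s))
            + f₂ / f₃ * (f₁ / f₂) * (∑ j ∈ Finset.range (k + 1), ∑ s ∈ Finset.range (j + 1),
              (k.choose j : ℂ) * (j.choose s : ℂ) * (f₂ / f₃) ^ j * (f₁ / f₂) ^ s *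
                X ((m - a) - c * k + (c - b) * j + (b - a) * s))) := by
          congr 1
          · refine Finset.sum_congr rfl fun j _ => ?_
            rw [Finset.mul_sum]
            refine Finset.sum_congr rfl fun s _ => ?_
            rw [show m - c * ((k : ℤ) + 1) + (c - b) * (j : ℤ) + (b - a) * (s : ℤ)
                = (m - c) - c * k + (c - b) * j + (b - a) * s from by ring]
            ring
          · rw [Finset.mul_sum, Finset.mul_sum, ← Finset.sum_add_distrib]
            exact Finset.sum_congr rfl fun j _ => perj j
      _ = X m / f₃ ^ (k + 1) := by
          rw [ih, ih, ih, hX m]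
          have hpk : (f₃ : ℂ) ^ k ≠ 0 := pow_ne_zero k hf₃
          have t1 : X (m - c) / f₃ ^ k = f₃ * X (m - c) / f₃ ^ (k + 1) := by
            rw [pow_succ, div_eq_div_iff hpk (mul_ne_zero hpk hf₃)]; ring
          have t2 : f₂ / f₃ * (X (m - b) / f₃ ^ k) = f₂ * X (m - b) / f₃ ^ (k + 1) := by
            rw [pow_succ, div_mul_div_comm,
              div_eq_div_iff (mul_ne_zero hf₃ hpk) (mul_ne_zero hpk hf₃)]; ring
          have t3 : f₂ / f₃ * (f₁ / f₂) * (X (m - a) / f₃ ^ k)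
              = f₁ * X (m - a) / f₃ ^ (k + 1) := by
            rw [pow_succ, div_mul_div_comm, div_mul_div_comm,
              div_eq_div_iff (mul_ne_zero (mul_ne_zero hf₃ hf₂) hpk)
                (mul_ne_zero hpk hf₃)]; ring
          rw [t1, t2, t3, ← add_div, ← add_div]
          ring_nf
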